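/- Let $T \in U^* \otimes V^* \otimes W^*$ and let $M_{T,r}: S^{r+1}U \to \Lambda^{r+1}V^* \otimes \Lambda^{r+1}W^*$ be the linear map satisfying $M_{T,r}(x^{\otimes(r+1)}) = (Tx)^{\wedge(r+1)}$ for all $x \in U$. If $T$ has minrank at most $r$, then $\operatorname{rk} M_{T,r} < \dim S^{r+1}U = \binom{k+r}{r+1}$, i.e., all $\binom{k+r}{r+1} \times \binom{k+r}{r+1}$ minors of $M_{T,r}$ vanish. -/

import Mathlib

open scoped BigOperators

/-- Contraction `Tx ∈ V^* ⊗ W^*` of `T ∈ U^* ⊗ V^* ⊗ W^*` against `x ∈ U`,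
viewed as an `m × n` matrix. -/
noncomputable def contractT {α β γ : Type*} [Fintype α]
    (T : α → β → γ → ℂ) (x : α → ℂ) : Matrix β γ ℂ :=
  Matrix.of fun j k => ∑ i, x i * T i j k

/-- The matrix of all `(r+1) × (r+1)` minors of a matrix `A`, i.e. `A^{∧(r+1)}`,
indexed by pairs of `(r+1)`-element subsets of the row and column index sets. -/
noncomputable def minorsMat {m n r : ℕ} (A : Matrix (Fin m) (Fin n) ℂ) :
    {s : Finset (Fin m) // s.card = r + 1} → {t : Finset (Fin n) // t.card = r + 1} → ℂ :=
  fun I J => (A.submatrix (fun p => I.1.orderEmbOfFin I.2 p)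
    (fun p => J.1.orderEmbOfFin J.2 p)).det

/-- If a matrix has rank at most `r`, all of its `(r+1) × (r+1)` minors vanish. -/
lemma det_submatrix_eq_zero_aux9 {m n r : ℕ} (A : Matrix (Fin m) (Fin n) ℂ) (hA : A.rank ≤ r)
    (re : Fin (r+1) → Fin m) (ce : Fin (r+1) → Fin n) :
    (A.submatrix re ce).det = 0 := by
  by_contra h
  have hu : IsUnit (A.submatrix re ce) :=
    (Matrix.isUnit_iff_isUnit_det _).mpr (isUnit_iff_ne_zero.mpr h)
  have hcard : (A.submatrix re ce).rank = r + 1 := by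
    rw [Matrix.rank_of_isUnit _ hu, Fintype.card_fin]
  have hle : (A.submatrix re ce).rank ≤ A.rank := by
    have h1 : ((1 : Matrix (Fin m) (Fin m) ℂ).submatrix re (Equiv.refl (Fin m))) *
        (A * ((1 : Matrix (Fin n) (Fin n) ℂ).submatrix (Equiv.refl (Fin n)) ce)) =
        A.submatrix re ce := by
      rw [Matrix.mul_submatrix_one, Matrix.one_submatrix_mul]
      simp [Matrix.submatrix_submatrix]
    calc (A.submatrix re ce).rank
        = (((1 : Matrix (Fin m) (Fin m) ℂ).submatrix re (Equiv.refl (Fin m))) *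
          (A * ((1 : Matrix (Fin n) (Fin n) ℂ).submatrix (Equiv.refl (Fin n)) ce))).rank := by
          rw [h1]
      _ ≤ (A * ((1 : Matrix (Fin n) (Fin n) ℂ).submatrix (Equiv.refl (Fin n)) ce)).rank :=
          Matrix.rank_mul_le_right _ _
      _ ≤ A.rank := Matrix.rank_mul_le_left _ _
  omega

/-- Veronese vector of degree `r+1`, indexed by monomials (multisets of variables). -/
noncomputable def wVer9 {k r : ℕ} (x : Fin k → ℂ) (d : Sym (Fin k) (r+1)) : ℂ :=
  ((d : Multiset (Fin k)).map x).prod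

def symOf9 {k r : ℕ} (f : Fin (r+1) → Fin k) : Sym (Fin k) (r+1) :=
  ⟨Finset.univ.val.map f, by simp⟩

noncomputable def coeffC9 {k m n r : ℕ} (T : Fin k → Fin m → Fin n → ℂ)
    (I : {s : Finset (Fin m) // s.card = r + 1}) (J : {t : Finset (Fin n) // t.card = r + 1})
    (f : Fin (r+1) → Fin k) : ℂ :=
  ∑ σ : Equiv.Perm (Fin (r+1)), ((Equiv.Perm.sign σ : ℤ) : ℂ) *
    ∏ p, T (f p) (I.1.orderEmbOfFin I.2 (σ p)) (J.1.orderEmbOfFin J.2 p)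

lemma wVer9_symOf9 {k r : ℕ} (x : Fin k → ℂ) (f : Fin (r+1) → Fin k) :
    wVer9 x (symOf9 f) = ∏ p, x (f p) := by
  rw [wVer9, symOf9, Finset.prod_eq_multiset_prod]
  simp [Multiset.map_map, Function.comp_def]

/-- Entrywise polynomial expansion of the minors matrix in terms of the Veronese. -/
lemma minors_eq9 {k m n r : ℕ} (T : Fin k → Fin m → Fin n → ℂ) (x : Fin k → ℂ)
    (I : {s : Finset (Fin m) // s.card = r + 1}) (J : {t : Finset (Fin n) // t.card = r + 1}) :
    minorsMat (r := r) (contractT T x) I J =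
      ∑ f : Fin (r+1) → Fin k, coeffC9 T I J f * wVer9 x (symOf9 f) := by
  classical
  calc minorsMat (r := r) (contractT T x) I J
      = ∑ σ : Equiv.Perm (Fin (r+1)), ((Equiv.Perm.sign σ : ℤ) : ℂ) *
          ∏ p, ∑ i, x i * T i (I.1.orderEmbOfFin I.2 (σ p)) (J.1.orderEmbOfFin J.2 p) := by
        rw [minorsMat, Matrix.det_apply]
        simp [contractT, Units.smul_def, zsmul_eq_mul]
    _ = ∑ σ : Equiv.Perm (Fin (r+1)), ((Equiv.Perm.sign σ : ℤ) : ℂ) *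
          ∑ f : Fin (r+1) → Fin k, ∏ p,
            (x (f p) * T (f p) (I.1.orderEmbOfFin I.2 (σ p)) (J.1.orderEmbOfFin J.2 p)) := by
        refine Finset.sum_congr rfl fun σ _ => ?_
        rw [Finset.prod_univ_sum]
        simp
    _ = ∑ f : Fin (r+1) → Fin k, ∑ σ : Equiv.Perm (Fin (r+1)),
          ((Equiv.Perm.sign σ : ℤ) : ℂ) * ((∏ p, x (f p)) *
            ∏ p, T (f p) (I.1.orderEmbOfFin I.2 (σ p)) (J.1.orderEmbOfFin J.2 p)) := by
        simp_rw [Finset.mul_sum, Finset.prod_mul_distrib]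
        exact Finset.sum_comm
    _ = ∑ f : Fin (r+1) → Fin k, coeffC9 T I J f * wVer9 x (symOf9 f) := by
        refine Finset.sum_congr rfl fun f _ => ?_
        rw [wVer9_symOf9, coeffC9, Finset.sum_mul]
        refine Finset.sum_congr rfl fun σ _ => by ring

/-- The linear map through which all minors matrices factor. -/
noncomputable def Lmap9 {k m n : ℕ} (r : ℕ) (T : Fin k → Fin m → Fin n → ℂ) :
    (Sym (Fin k) (r+1) → ℂ) →ₗ[ℂ]
      ({s : Finset (Fin m) // s.card = r + 1} → {t : Finset (Fin n) // t.card = r + 1} → ℂ) where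
  toFun u := fun I J => ∑ f : Fin (r+1) → Fin k, coeffC9 T I J f * u (symOf9 f)
  map_add' u v := by
    funext I J
    simp [mul_add, Finset.sum_add_distrib]
  map_smul' c u := by
    funext I J
    simp [Finset.mul_sum, mul_left_comm]

/-- If `T ∈ U^* ⊗ V^* ⊗ W^*` (with `dim U = k`) has minrank at most `r`, then the linear
map `M_{T,r} : S^{r+1} U → Λ^{r+1} V^* ⊗ Λ^{r+1} W^*`, determined by
`M_{T,r}(x^{⊗(r+1)}) = (Tx)^{∧(r+1)}`, has rank strictly less than
`dim S^{r+1} U = C(k+r, r+1)`; equivalently (since the powers `x^{⊗(r+1)}` span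
`S^{r+1}U` over `ℂ`), the span of `{(Tx)^{∧(r+1)} : x ∈ U}` has dimension less than
`C(k+r, r+1)`, i.e. all maximal minors of `M_{T,r}` vanish. -/
theorem stmt9 {k m n : ℕ} (r : ℕ) (T : Fin k → Fin m → Fin n → ℂ)
    (hT : ∃ x : Fin k → ℂ, x ≠ 0 ∧ (contractT T x).rank ≤ r) :
    Module.finrank ℂ (Submodule.span ℂ
      {M : {s : Finset (Fin m) // s.card = r + 1} →
            {t : Finset (Fin n) // t.card = r + 1} → ℂ |
        ∃ x : Fin k → ℂ, M = minorsMat (r := r) (contractT T x)}) <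
    Nat.choose (k + r) (r + 1) := by
  classical
  obtain ⟨x₀, hx₀, hrk⟩ := hT
  obtain ⟨i₀, hi₀⟩ := Function.ne_iff.mp hx₀
  set L := Lmap9 r T with hL
  have hMx : ∀ x : Fin k → ℂ, minorsMat (r := r) (contractT T x) = L (wVer9 x) := by
    intro x
    funext I J
    exact minors_eq9 T x I J
  set S : Submodule ℂ (Sym (Fin k) (r+1) → ℂ) :=
    Submodule.span ℂ (Set.range (fun x : Fin k → ℂ => wVer9 (r := r) x)) with hS
  set L' : S →ₗ[ℂ] _ := L.comp S.subtype with hL'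
  -- the span is contained in the range of L'
  have hsub : Submodule.span ℂ
      {M : {s : Finset (Fin m) // s.card = r + 1} →
            {t : Finset (Fin n) // t.card = r + 1} → ℂ |
        ∃ x : Fin k → ℂ, M = minorsMat (r := r) (contractT T x)} ≤ LinearMap.range L' := by
    refine Submodule.span_le.mpr ?_
    rintro M ⟨x, rfl⟩
    refine ⟨⟨wVer9 x, Submodule.subset_span ⟨x, rfl⟩⟩, ?_⟩
    simp [hL', hMx x]
  -- w x₀ is a nonzero element of the kernel of L'
  have hi₀' : x₀ i₀ ≠ 0 := by simpa using hi₀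
  have hval : wVer9 (r := r) x₀ (Sym.replicate (r+1) i₀) = x₀ i₀ ^ (r+1) := by
    rw [wVer9]
    simp [Sym.coe_replicate, Multiset.map_replicate, Multiset.prod_replicate]
    ring
  have hw0 : (wVer9 (r := r) x₀) ≠ 0 := by
    intro h
    have hzz := congrFun h (Sym.replicate (r+1) i₀)
    rw [hval] at hzz
    exact pow_ne_zero _ hi₀' hzz
  have hLw0 : L (wVer9 x₀) = 0 := by
    rw [← hMx x₀]
    funext I J
    exact det_submatrix_eq_zero_aux9 _ hrk _ _
  have hker : 0 < Module.finrank ℂ (LinearMap.ker L') := by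
    refine (Module.finrank_pos_iff (R := ℂ) (M := LinearMap.ker L')).mpr ?_
    refine nontrivial_of_ne ⟨⟨wVer9 x₀, Submodule.subset_span ⟨x₀, rfl⟩⟩, ?_⟩ 0 ?_
    · show L' _ = 0
      simp [hL', hLw0]
    · intro h
      apply hw0
      have h1 := congrArg Subtype.val h
      have h2 := congrArg Subtype.val h1
      simpa using h2
  have hrn : Module.finrank ℂ (LinearMap.range L') + Module.finrank ℂ (LinearMap.ker L')
      = Module.finrank ℂ S := LinearMap.finrank_range_add_finrank_ker L'
  have hSle : Module.finrank ℂ S ≤ Module.finrank ℂ (Sym (Fin k) (r+1) → ℂ) :=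
    Submodule.finrank_le S
  have hQ : Module.finrank ℂ (Sym (Fin k) (r+1) → ℂ) = Nat.choose (k + r) (r + 1) := by
    rw [Module.finrank_fintype_fun_eq_card, Sym.card_sym_eq_choose, Fintype.card_fin]
    have hkr : k + (r + 1) - 1 = k + r := by omega
    rw [hkr]
  have hpos : 0 < Nat.choose (k + r) (r + 1) := by
    apply Nat.choose_pos
    have : (i₀ : ℕ) < k := i₀.2
    omega
  have h1 : Module.finrank ℂ (Submodule.span ℂ
      {M : {s : Finset (Fin m) // s.card = r + 1} →
            {t : Finset (Fin n) // t.card = r + 1} → ℂ |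
        ∃ x : Fin k → ℂ, M = minorsMat (r := r) (contractT T x)})
      ≤ Module.finrank ℂ (LinearMap.range L') := Submodule.finrank_mono hsub
  omega
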